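/- Let f : ℝⁿ → ℝ be C¹-smooth and let (x^k) ⊂ ℝⁿ satisfy, for all sufficiently large k and some constants α, β > 0, the conditions f(x^k) − f(x^{k+1}) ≥ α‖x^{k+1} − x^k‖² and ‖∇f(x^k)‖ ≤ β‖x^{k+1} − x^k‖. Suppose x̄ is an accumulation point of (x^k) and f satisfies the exponential PLK condition at x̄ with exponent q ∈ (0,1) and constant M > 0. Then: (i) if q ∈ (0,1/2), the sequence terminates at x̄ in finitely many steps, i.e., there is N with x^k = x̄ for all k ≥ N; (ii) if q = 1/2, there exist C > 0 and c ∈ (0,1) with ‖x^k − x̄‖ ≤ C·c^k for all k; (iii) if q ∈ (1/2,1), there exists C > 0 with ‖x^k − x̄‖ ≤ C·k^{−(1−q)/(2q−1)} for all sufficiently large k. -/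

import Mathlib

open Set Filter

private theorem bern_aux {a b s : ℝ} (ha : 0 < a) (hb : 0 ≤ b) (hs0 : 0 ≤ s) (hs1 : s ≤ 1) :
    s * a ^ (s - 1) * (a - b) ≤ a ^ s - b ^ s := by
  have hz : -1 ≤ b / a - 1 := by
    have : 0 ≤ b / a := div_nonneg hb ha.le
    linarith
  have h := rpow_one_add_le_one_add_mul_self hz hs0 hs1
  have h1 : (1 : ℝ) + (b / a - 1) = b / a := by ring
  rw [h1] at h
  have hdiv : (b / a) ^ s = b ^ s / a ^ s := Real.div_rpow hb ha.le s
  have has : 0 < a ^ s := Real.rpow_pos_of_pos ha s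
  have h2 : b ^ s ≤ (1 + s * (b / a - 1)) * a ^ s := by
    rw [hdiv] at h
    calc b ^ s = (b ^ s / a ^ s) * a ^ s := by field_simp
    _ ≤ (1 + s * (b / a - 1)) * a ^ s := mul_le_mul_of_nonneg_right h has.le
  have h3 : a ^ (s - 1) = a ^ s / a := by
    rw [Real.rpow_sub ha, Real.rpow_one]
  have h4 : (1 + s * (b / a - 1)) * a ^ s = a ^ s + s * (a ^ s / a) * (b - a) := by
    field_simp
  rw [h3]
  rw [h4] at h2
  linarith

private theorem le_of_eps {u v : ℝ} (h : ∀ ε > (0:ℝ), u ≤ v + ε) : u ≤ v := by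
  by_contra hc
  push_neg at hc
  have := h ((u - v)/2) (by linarith)
  linarith

/-- The exponential PLK condition for `f` at `x₀` with exponent `q` and constant `M`:
the PLK condition holds with desingularizing function `φ t = M * t ^ (1 - q)`, whose
derivative is `M * (1 - q) * t ^ (-q)`. -/
def ExpPLKCondition {n : ℕ} (f : EuclideanSpace ℝ (Fin n) → ℝ)
    (x₀ : EuclideanSpace ℝ (Fin n)) (M q : ℝ) : Prop :=
  ∃ (η : ℝ) (U : Set (EuclideanSpace ℝ (Fin n))),
    0 < η ∧ U ∈ nhds x₀ ∧
    ∀ x ∈ U, f x₀ < f x → f x < f x₀ + η →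
      1 ≤ M * (1 - q) * (f x - f x₀) ^ (-q : ℝ) * ‖gradient f x‖

set_option maxHeartbeats 2000000 in
/-- Convergence rates under the exponential PLK condition for a sequence of iterates
satisfying a sufficient decrease condition and a relative gradient bound. -/
theorem rates_of_expPLK {n : ℕ}
    (f : EuclideanSpace ℝ (Fin n) → ℝ) (hf : ContDiff ℝ 1 f)
    (x : ℕ → EuclideanSpace ℝ (Fin n)) (α β : ℝ) (hα : 0 < α) (hβ : 0 < β)
    (hdec : ∃ N : ℕ, ∀ k ≥ N, α * ‖x (k+1) - x k‖^2 ≤ f (x k) - f (x (k+1)))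
    (hgrad : ∃ N : ℕ, ∀ k ≥ N, ‖gradient f (x k)‖ ≤ β * ‖x (k+1) - x k‖)
    (xb : EuclideanSpace ℝ (Fin n))
    (hacc : MapClusterPt xb atTop x)
    (M q : ℝ) (hM : 0 < M) (hq : q ∈ Set.Ioo (0:ℝ) 1)
    (hPLK : ExpPLKCondition f xb M q) :
    (q < 1/2 → ∃ N : ℕ, ∀ k ≥ N, x k = xb) ∧
    (q = 1/2 → ∃ C > (0:ℝ), ∃ c ∈ Set.Ioo (0:ℝ) 1, ∀ k : ℕ, ‖x k - xb‖ ≤ C * c ^ k) ∧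
    (1/2 < q → ∃ C > (0:ℝ), ∃ N : ℕ, ∀ k ≥ N,
      ‖x k - xb‖ ≤ C * (k : ℝ) ^ (-(1 - q) / (2*q - 1))) := by
  obtain ⟨q0, q1⟩ := hq
  obtain ⟨N₁, hN₁⟩ := hdec
  obtain ⟨N₂, hN₂⟩ := hgrad
  obtain ⟨η, U, hη, hU, hKL⟩ := hPLK
  set N₀ := max N₁ N₂ with hN₀def
  have hdec' : ∀ k, N₀ ≤ k → α * ‖x (k+1) - x k‖^2 ≤ f (x k) - f (x (k+1)) :=
    fun k hk => hN₁ k (le_trans (le_max_left _ _) hk)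
  have hgrad' : ∀ k, N₀ ≤ k → ‖gradient f (x k)‖ ≤ β * ‖x (k+1) - x k‖ :=
    fun k hk => hN₂ k (le_trans (le_max_right _ _) hk)
  have mono1 : ∀ k, N₀ ≤ k → f (x (k+1)) ≤ f (x k) := by
    intro k hk
    have h := hdec' k hk
    nlinarith [sq_nonneg ‖x (k+1) - x k‖, hα.le]
  have mono : ∀ k, N₀ ≤ k → ∀ m, k ≤ m → f (x m) ≤ f (x k) := by
    intro k hk m hm
    induction m, hm using Nat.le_induction with
    | base => exact le_refl _
    | succ m hm ih => exact le_trans (mono1 m (hk.trans hm)) ih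
  have hfreq : ∀ ε > (0:ℝ), ∀ K : ℕ, ∃ m ≥ K, dist (x m) xb < ε := by
    intro ε hε K
    have h := (mapClusterPt_iff_frequently.mp hacc) (Metric.ball xb ε) (Metric.ball_mem_nhds xb hε)
    obtain ⟨m, hm, hmem⟩ := (frequently_atTop.mp h) K
    exact ⟨m, hm, by simpa [Metric.mem_ball, dist_comm] using hmem⟩
  have hcont : ContinuousAt f xb := hf.continuous.continuousAt
  have hge : ∀ k, N₀ ≤ k → f xb ≤ f (x k) := by
    intro k hk
    by_contra hlt
    push_neg at hlt
    have hev : f ⁻¹' {z | f (x k) < z} ∈ nhds xb := hcont (lt_mem_nhds hlt)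
    obtain ⟨m, hm, h2⟩ := (frequently_atTop.mp ((mapClusterPt_iff_frequently.mp hacc) _ hev)) k
    exact absurd (mono k hk m hm) (not_le.mpr h2)
  have hto : ∀ ε > (0:ℝ), ∃ K, N₀ ≤ K ∧ ∀ k, K ≤ k → f (x k) - f xb < ε := by
    intro ε hε
    have hev : f ⁻¹' {z | z < f xb + ε} ∈ nhds xb := hcont (gt_mem_nhds (by linarith))
    obtain ⟨m, hm, h2⟩ := (frequently_atTop.mp ((mapClusterPt_iff_frequently.mp hacc) _ hev)) N₀
    refine ⟨m, hm, fun k hk => ?_⟩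
    have := mono m hm k hk
    simp only [Set.mem_preimage, Set.mem_setOf_eq] at h2
    linarith
  by_cases hA : ∃ k, N₀ ≤ k ∧ f (x k) = f xb
  · -- Case A : the value f xb is attained; the sequence is eventually constant equal to xb.
    obtain ⟨k₁, hk₁, hfk₁⟩ := hA
    have hconst : ∀ m, k₁ ≤ m → x m = x k₁ := by
      intro m hm
      induction m, hm using Nat.le_induction with
      | base => rfl
      | succ m hm ih =>
        have h1 := hdec' m (hk₁.trans hm)
        have h2 := hge (m+1) (hk₁.trans hm |>.trans (Nat.le_succ m))
        rw [ih, hfk₁] at h1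
        have h3 : ‖x (m+1) - x k₁‖^2 ≤ 0 := by nlinarith
        have h4 : ‖x (m+1) - x k₁‖ = 0 := by nlinarith [norm_nonneg (x (m+1) - x k₁)]
        have h5 : x (m+1) - x k₁ = 0 := norm_eq_zero.mp h4
        rw [sub_eq_zero] at h5
        exact h5
    have hxk₁ : x k₁ = xb := by
      have hdd : ∀ ε > (0:ℝ), dist (x k₁) xb < ε := by
        intro ε hε
        obtain ⟨m, hm, h⟩ := hfreq ε hε k₁
        rwa [hconst m hm] at h
      have hd0 : dist (x k₁) xb ≤ 0 := by
        by_contra h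
        push_neg at h
        exact absurd (hdd _ h) (lt_irrefl _)
      exact eq_of_dist_eq_zero (le_antisymm hd0 dist_nonneg)
    refine ⟨fun _ => ⟨k₁, fun k hk => (hconst k hk).trans hxk₁⟩, fun _ => ?_, fun _ => ?_⟩
    · -- geometric bound with c = 1/2
      set C := 1 + ∑ j ∈ Finset.range k₁, ‖x j - xb‖ * 2^j with hCdef
      have hC : 0 < C := by positivity
      refine ⟨C, hC, 1/2, ⟨by norm_num, by norm_num⟩, fun k => ?_⟩
      rcases le_or_gt k₁ k with h | h
      · rw [hconst k h, hxk₁]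
        simp only [sub_self, norm_zero]
        positivity
      · have hsum : ‖x k - xb‖ * 2^k ≤ C := by
          have hle : ‖x k - xb‖ * 2^k ≤ ∑ j ∈ Finset.range k₁, ‖x j - xb‖ * 2^j :=
            Finset.single_le_sum (f := fun j => ‖x j - xb‖ * 2^j)
              (fun i _ => by positivity) (Finset.mem_range.mpr h)
          linarith
        have h2k : (0:ℝ) < 2^k := by positivity
        rw [show ((1:ℝ)/2)^k = ((2:ℝ)^k)⁻¹ by rw [one_div, inv_pow]]
        calc ‖x k - xb‖ = (‖x k - xb‖ * 2^k) * ((2:ℝ)^k)⁻¹ := by field_simp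
        _ ≤ C * ((2:ℝ)^k)⁻¹ := mul_le_mul_of_nonneg_right hsum (by positivity)
    · refine ⟨1, one_pos, max k₁ 1, fun k hk => ?_⟩
      rw [hconst k (le_trans (le_max_left _ _) hk), hxk₁]
      simp only [sub_self, norm_zero, one_mul]
      have hk1 : (0:ℝ) < (k:ℝ) := by
        have : 1 ≤ k := le_trans (le_max_right _ _) hk
        exact_mod_cast Nat.lt_of_lt_of_le Nat.zero_lt_one this
      exact (Real.rpow_pos_of_pos hk1 _).le
  · -- Case B : f (x k) > f xb for all k ≥ N₀.
    push_neg at hA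
    have hpos : ∀ k, N₀ ≤ k → 0 < f (x k) - f xb :=
      fun k hk => sub_pos.mpr (lt_of_le_of_ne (hge k hk) (Ne.symm (hA k hk)))
    obtain ⟨ρ, hρ, hballU⟩ : ∃ ρ > (0:ℝ), Metric.closedBall xb ρ ⊆ U := by
      obtain ⟨ε, hε, hb⟩ := Metric.mem_nhds_iff.mp hU
      exact ⟨ε/2, by linarith, (Metric.closedBall_subset_ball (by linarith)).trans hb⟩
    have h1q : (0:ℝ) < 1 - q := by linarith
    -- choose ε₂ small enough
    set a₂ : ℝ := ρ * α / (2 * β * M) with ha₂def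
    have ha₂ : 0 < a₂ := by positivity
    set ε₂ : ℝ := min η (a₂ ^ ((1:ℝ)/(1-q))) with hε₂def
    have hε₂ : 0 < ε₂ := lt_min hη (Real.rpow_pos_of_pos ha₂ _)
    obtain ⟨K₂, hK₂N₀, hK₂⟩ := hto ε₂ hε₂
    obtain ⟨k₀, hk₀K, hk₀d⟩ := hfreq (ρ/2) (by linarith) K₂
    have hk₀N₀ : N₀ ≤ k₀ := hK₂N₀.trans hk₀K
    have hrk₀ε₂ : f (x k₀) - f xb < ε₂ := hK₂ k₀ hk₀K
    have hrk₀η : f (x k₀) - f xb < η := lt_of_lt_of_le hrk₀ε₂ (min_le_left _ _)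
    -- D k is the scaled desingularized value
    set D : ℕ → ℝ := fun k => (β/α) * (M * (f (x k) - f xb) ^ (1 - q)) with hDdef
    have hDnn : ∀ k, N₀ ≤ k → 0 ≤ D k := by
      intro k hk
      have := (hpos k hk).le
      simp only [hDdef]
      positivity
    have hDk₀ : D k₀ ≤ ρ/2 := by
      have hr0 : 0 < f (x k₀) - f xb := hpos k₀ hk₀N₀
      have h1 : (f (x k₀) - f xb) ^ (1-q) ≤ (a₂ ^ ((1:ℝ)/(1-q))) ^ (1-q) := by
        apply Real.rpow_le_rpow hr0.le _ h1q.le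
        exact le_of_lt (lt_of_lt_of_le hrk₀ε₂ (min_le_right _ _))
      have h2 : (a₂ ^ ((1:ℝ)/(1-q))) ^ (1-q) = a₂ := by
        rw [← Real.rpow_mul ha₂.le]
        rw [show (1:ℝ)/(1-q) * (1-q) = 1 by field_simp]
        exact Real.rpow_one a₂
      rw [h2] at h1
      simp only [hDdef]
      rw [ha₂def] at h1
      have hαβM : 0 < β / α * M := by positivity
      calc (β/α) * (M * (f (x k₀) - f xb) ^ (1-q))
          ≤ (β/α) * (M * (ρ * α / (2 * β * M))) := by
            apply mul_le_mul_of_nonneg_left _ (by positivity)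
            exact mul_le_mul_of_nonneg_left h1 hM.le
      _ = ρ/2 := by field_simp
    have hbase : ‖x k₀ - xb‖ + D k₀ ≤ ρ := by
      rw [dist_eq_norm] at hk₀d
      linarith
    -- one-step estimate
    have step2 : ∀ k, N₀ ≤ k → x k ∈ U → f (x k) - f xb < η →
        ‖x (k+1) - x k‖ ≤ D k - D (k+1) := by
      intro k hk hxU hkη
      have ha : 0 < f (x k) - f xb := hpos k hk
      have hb : 0 < f (x (k+1)) - f xb := hpos (k+1) (hk.trans (Nat.le_succ k))
      have hba : f (x (k+1)) - f xb ≤ f (x k) - f xb := by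
        have := mono1 k hk; linarith
      have hd0 : (0:ℝ) ≤ ‖x (k+1) - x k‖ := norm_nonneg _
      have hkl : 1 ≤ M * (1-q) * (f (x k) - f xb) ^ (-q : ℝ) * ‖gradient f (x k)‖ :=
        hKL (x k) hxU (by linarith) (by linarith)
      have hGpos : 0 < M * (1-q) * (f (x k) - f xb) ^ (-q : ℝ) := by
        have := Real.rpow_pos_of_pos ha (-q)
        positivity
      have h1 : 1 ≤ M * (1-q) * (f (x k) - f xb) ^ (-q : ℝ) * (β * ‖x (k+1) - x k‖) :=
        le_trans hkl (mul_le_mul_of_nonneg_left (hgrad' k hk) hGpos.le)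
      have hdec2 : α * ‖x (k+1) - x k‖^2 ≤ (f (x k) - f xb) - (f (x (k+1)) - f xb) := by
        have := hdec' k hk; linarith
      have hbern : (1-q) * (f (x k) - f xb) ^ (-q : ℝ) *
          ((f (x k) - f xb) - (f (x (k+1)) - f xb)) ≤
          (f (x k) - f xb) ^ (1-q) - (f (x (k+1)) - f xb) ^ (1-q) := by
        have h := bern_aux (s := 1-q) ha hb.le h1q.le (by linarith)
        rw [show (1:ℝ) - q - 1 = -q by ring] at h
        exact h
      have main : (α/β) * ‖x (k+1) - x k‖ ≤
          M * (f (x k) - f xb) ^ (1-q) - M * (f (x (k+1)) - f xb) ^ (1-q) := by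
        calc (α/β) * ‖x (k+1) - x k‖ = (α/β) * ‖x (k+1) - x k‖ * 1 := by ring
        _ ≤ (α/β) * ‖x (k+1) - x k‖ *
            (M * (1-q) * (f (x k) - f xb) ^ (-q : ℝ) * (β * ‖x (k+1) - x k‖)) := by
          apply mul_le_mul_of_nonneg_left h1 (by positivity)
        _ = M * (1-q) * (f (x k) - f xb) ^ (-q : ℝ) * (α * ‖x (k+1) - x k‖^2) := by
          field_simp
        _ ≤ M * (1-q) * (f (x k) - f xb) ^ (-q : ℝ) *
            ((f (x k) - f xb) - (f (x (k+1)) - f xb)) :=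
          mul_le_mul_of_nonneg_left hdec2 hGpos.le
        _ = M * ((1-q) * (f (x k) - f xb) ^ (-q : ℝ) *
            ((f (x k) - f xb) - (f (x (k+1)) - f xb))) := by ring
        _ ≤ M * ((f (x k) - f xb) ^ (1-q) - (f (x (k+1)) - f xb) ^ (1-q)) :=
          mul_le_mul_of_nonneg_left hbern hM.le
        _ = M * (f (x k) - f xb) ^ (1-q) - M * (f (x (k+1)) - f xb) ^ (1-q) := by ring
      have hfin := mul_le_mul_of_nonneg_left main (le_of_lt (by positivity : (0:ℝ) < β/α))
      simp only [hDdef]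
      calc ‖x (k+1) - x k‖ = (β/α) * ((α/β) * ‖x (k+1) - x k‖) := by field_simp
      _ ≤ (β/α) * (M * (f (x k) - f xb) ^ (1-q) - M * (f (x (k+1)) - f xb) ^ (1-q)) := hfin
      _ = (β/α) * (M * (f (x k) - f xb) ^ (1-q)) -
          (β/α) * (M * (f (x (k+1)) - f xb) ^ (1-q)) := by ring
    -- the iterates stay in the ball
    have inb : ∀ m, k₀ ≤ m → ‖x m - xb‖ + D m ≤ ‖x k₀ - xb‖ + D k₀ := by
      intro m hm
      induction m, hm using Nat.le_induction with
      | base => exact le_refl _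
      | succ m hm ih =>
        have hmN₀ : N₀ ≤ m := hk₀N₀.trans hm
        have hball : dist (x m) xb ≤ ρ := by
          rw [dist_eq_norm]
          have := hDnn m hmN₀
          linarith
        have hxU : x m ∈ U := hballU (Metric.mem_closedBall.mpr hball)
        have hrm : f (x m) - f xb < η := by
          have := mono k₀ hk₀N₀ m hm
          linarith
        have hs := step2 m hmN₀ hxU hrm
        have htri : ‖x (m+1) - xb‖ ≤ ‖x (m+1) - x m‖ + ‖x m - xb‖ := by
          have h := norm_add_le (x (m+1) - x m) (x m - xb)
          rwa [sub_add_sub_cancel] at h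
        linarith
    have memU : ∀ m, k₀ ≤ m → x m ∈ U := by
      intro m hm
      apply hballU
      apply Metric.mem_closedBall.mpr
      rw [dist_eq_norm]
      have h1 := inb m hm
      have h2 := hDnn m (hk₀N₀.trans hm)
      linarith
    have hrη : ∀ m, k₀ ≤ m → f (x m) - f xb < η := by
      intro m hm
      have := mono k₀ hk₀N₀ m hm
      linarith
    have stepAll : ∀ m, k₀ ≤ m → ‖x (m+1) - x m‖ ≤ D m - D (m+1) :=
      fun m hm => step2 m (hk₀N₀.trans hm) (memU m hm) (hrη m hm)
    have chain : ∀ k, k₀ ≤ k → ∀ m, k ≤ m → ‖x m - x k‖ ≤ D k - D m := by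
      intro k hk m hm
      induction m, hm using Nat.le_induction with
      | base => simp
      | succ m hm ih =>
        have htri : ‖x (m+1) - x k‖ ≤ ‖x (m+1) - x m‖ + ‖x m - x k‖ := by
          have h := norm_add_le (x (m+1) - x m) (x m - x k)
          rwa [sub_add_sub_cancel] at h
        have hs := stepAll m (hk.trans hm)
        linarith
    have key : ∀ k, k₀ ≤ k → ‖x k - xb‖ ≤ D k := by
      intro k hk
      apply le_of_eps
      intro ε hε
      obtain ⟨m, hm, hd⟩ := hfreq ε hε k
      have h1 := chain k hk m hm
      have h2 := hDnn m (hk₀N₀.trans (hk.trans hm))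
      have htri : ‖x k - xb‖ ≤ ‖x k - x m‖ + ‖x m - xb‖ := by
        have h := norm_add_le (x k - x m) (x m - xb)
        rwa [sub_add_sub_cancel] at h
      rw [dist_eq_norm] at hd
      rw [norm_sub_rev] at h1
      linarith
    -- the basic recursion on r k
    set A : ℝ := (M * (1-q) * β)^2 / α with hAdef
    have hA : 0 < A := by positivity
    have decr : ∀ k, k₀ ≤ k →
        (f (x k) - f xb) ^ (2*q) ≤ A * ((f (x k) - f xb) - (f (x (k+1)) - f xb)) := by
      intro k hk
      have hkN₀ : N₀ ≤ k := hk₀N₀.trans hk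
      have ha : 0 < f (x k) - f xb := hpos k hkN₀
      have hkl : 1 ≤ M * (1-q) * (f (x k) - f xb) ^ (-q : ℝ) * ‖gradient f (x k)‖ :=
        hKL (x k) (memU k hk) (by linarith) (by have := hrη k hk; linarith)
      have hGpos : 0 < M * (1-q) * (f (x k) - f xb) ^ (-q : ℝ) := by
        have := Real.rpow_pos_of_pos ha (-q)
        positivity
      have h1 : 1 ≤ M * (1-q) * (f (x k) - f xb) ^ (-q : ℝ) * (β * ‖x (k+1) - x k‖) :=
        le_trans hkl (mul_le_mul_of_nonneg_left (hgrad' k hkN₀) hGpos.le)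
      have e1 : (f (x k) - f xb) ^ (q : ℝ) * (f (x k) - f xb) ^ (-q : ℝ) = 1 := by
        rw [← Real.rpow_add ha]
        simp
      have hq1 : 0 < (f (x k) - f xb) ^ (q : ℝ) := Real.rpow_pos_of_pos ha q
      have h2 : (f (x k) - f xb) ^ (q : ℝ) ≤ M * (1-q) * β * ‖x (k+1) - x k‖ := by
        calc (f (x k) - f xb) ^ (q : ℝ) = (f (x k) - f xb) ^ (q : ℝ) * 1 := by ring
        _ ≤ (f (x k) - f xb) ^ (q : ℝ) *
            (M * (1-q) * (f (x k) - f xb) ^ (-q : ℝ) * (β * ‖x (k+1) - x k‖)) :=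
          mul_le_mul_of_nonneg_left h1 hq1.le
        _ = (M * (1-q) * β * ‖x (k+1) - x k‖) *
            ((f (x k) - f xb) ^ (q : ℝ) * (f (x k) - f xb) ^ (-q : ℝ)) := by ring
        _ = M * (1-q) * β * ‖x (k+1) - x k‖ := by rw [e1]; ring
      have h3 : ((f (x k) - f xb) ^ (q : ℝ))^2 ≤ (M * (1-q) * β * ‖x (k+1) - x k‖)^2 :=
        pow_le_pow_left₀ hq1.le h2 2
      have e2 : ((f (x k) - f xb) ^ (q : ℝ))^2 = (f (x k) - f xb) ^ (2*q) := by
        rw [← Real.rpow_natCast ((f (x k) - f xb) ^ (q : ℝ)) 2, ← Real.rpow_mul ha.le]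
        norm_num [mul_comm]
      have hdec2 : α * ‖x (k+1) - x k‖^2 ≤ (f (x k) - f xb) - (f (x (k+1)) - f xb) := by
        have := hdec' k hkN₀; linarith
      rw [← e2]
      calc ((f (x k) - f xb) ^ (q : ℝ))^2 ≤ (M * (1-q) * β * ‖x (k+1) - x k‖)^2 := h3
      _ = (M * (1-q) * β)^2 / α * (α * ‖x (k+1) - x k‖^2) := by field_simp
      _ ≤ (M * (1-q) * β)^2 / α * ((f (x k) - f xb) - (f (x (k+1)) - f xb)) :=
        mul_le_mul_of_nonneg_left hdec2 (by positivity)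
      _ = A * ((f (x k) - f xb) - (f (x (k+1)) - f xb)) := by rw [hAdef]
    refine ⟨?_, ?_, ?_⟩
    · -- q < 1/2 : contradiction in case B
      intro hq2
      exfalso
      set θ : ℝ := 1 - 2*q with hθdef
      have hθ : 0 < θ := by rw [hθdef]; linarith
      set ε₃ : ℝ := (A ^ (θ⁻¹))⁻¹ with hε₃def
      have hε₃ : 0 < ε₃ := by
        rw [hε₃def]
        exact inv_pos.mpr (Real.rpow_pos_of_pos hA _)
      obtain ⟨K₃, _, hK₃⟩ := hto ε₃ hε₃
      set k := max K₃ k₀ with hkdef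
      have hkk₀ : k₀ ≤ k := le_max_right _ _
      have hr : 0 < f (x k) - f xb := hpos k (hk₀N₀.trans hkk₀)
      have hr1 : 0 < f (x (k+1)) - f xb := hpos (k+1) ((hk₀N₀.trans hkk₀).trans (Nat.le_succ k))
      have hrε₃ : f (x k) - f xb < ε₃ := hK₃ k (le_max_left _ _)
      have hinv : A ^ (θ⁻¹) < (f (x k) - f xb)⁻¹ := by
        rw [hε₃def] at hrε₃
        have h := (inv_strictAnti₀ hr hrε₃)
        rwa [inv_inv] at h
      have h2 : A < ((f (x k) - f xb)⁻¹) ^ θ := by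
        have h := Real.rpow_lt_rpow (Real.rpow_pos_of_pos hA θ⁻¹).le hinv hθ
        rwa [← Real.rpow_mul hA.le, inv_mul_cancel₀ hθ.ne', Real.rpow_one] at h
      have e3 : (f (x k) - f xb) ^ (2*q) = (f (x k) - f xb) * ((f (x k) - f xb)⁻¹) ^ θ := by
        rw [Real.inv_rpow hr.le, show (2*q : ℝ) = 1 - θ by rw [hθdef]; ring,
          Real.rpow_sub hr, Real.rpow_one]
        rw [div_eq_mul_inv]
      have hd := decr k hkk₀
      rw [e3] at hd
      have h4 : (f (x k) - f xb) * A < (f (x k) - f xb) * ((f (x k) - f xb)⁻¹) ^ θ :=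
        (mul_lt_mul_iff_right₀ hr).mpr h2
      have h5 : (f (x k) - f xb) * A <
          A * ((f (x k) - f xb) - (f (x (k+1)) - f xb)) := lt_of_lt_of_le h4 hd
      have h6 : 0 < A * (f (x (k+1)) - f xb) := mul_pos hA hr1
      nlinarith [h5, h6]
    · -- q = 1/2 : geometric rate
      intro hq2
      have decr' : ∀ k, k₀ ≤ k →
          f (x k) - f xb ≤ A * ((f (x k) - f xb) - (f (x (k+1)) - f xb)) := by
        intro k hk
        have h := decr k hk
        rw [hq2] at h
        rw [show (2*(1/2:ℝ)) = 1 by norm_num] at h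
        rwa [Real.rpow_one] at h
      have hA1 : 1 < A := by
        have h := decr' k₀ (le_refl k₀)
        have hr : 0 < f (x k₀) - f xb := hpos k₀ hk₀N₀
        have hr1 : 0 < f (x (k₀+1)) - f xb := hpos (k₀+1) (hk₀N₀.trans (Nat.le_succ k₀))
        nlinarith
      set c₁ : ℝ := 1 - A⁻¹ with hc₁def
      have hc₁0 : 0 < c₁ := by
        rw [hc₁def]
        have : A⁻¹ < 1 := by
          rw [inv_lt_one_iff₀]; right; exact hA1
        linarith
      have hc₁1 : c₁ < 1 := by
        rw [hc₁def]
        have : 0 < A⁻¹ := inv_pos.mpr hA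
        linarith
      have onestep : ∀ k, k₀ ≤ k → f (x (k+1)) - f xb ≤ c₁ * (f (x k) - f xb) := by
        intro k hk
        have h := decr' k hk
        have hAc : A * (c₁ * (f (x k) - f xb)) = A * (f (x k) - f xb) - (f (x k) - f xb) := by
          rw [hc₁def]; field_simp
        have h2 : A * (f (x (k+1)) - f xb) ≤ A * (c₁ * (f (x k) - f xb)) := by
          rw [hAc]; linarith
        exact le_of_mul_le_mul_left h2 hA
      have geo : ∀ m : ℕ, f (x (k₀ + m)) - f xb ≤ (f (x k₀) - f xb) * c₁ ^ m := by
        intro m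
        induction m with
        | zero => simp
        | succ m ih =>
          have h1 := onestep (k₀ + m) (Nat.le_add_right _ _)
          have h2 : c₁ * (f (x (k₀+m)) - f xb) ≤ c₁ * ((f (x k₀) - f xb) * c₁ ^ m) :=
            mul_le_mul_of_nonneg_left ih hc₁0.le
          calc f (x (k₀ + (m+1))) - f xb = f (x (k₀ + m + 1)) - f xb := by ring_nf
          _ ≤ c₁ * (f (x (k₀+m)) - f xb) := h1
          _ ≤ c₁ * ((f (x k₀) - f xb) * c₁ ^ m) := h2
          _ = (f (x k₀) - f xb) * c₁ ^ (m+1) := by ring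
      set c : ℝ := c₁ ^ ((1:ℝ) - q) with hcdef
      have hc0 : 0 < c := Real.rpow_pos_of_pos hc₁0 _
      have hc1 : c < 1 := Real.rpow_lt_one hc₁0.le hc₁1 h1q
      have hcm : ∀ m : ℕ, ((c₁ ^ m : ℝ)) ^ ((1:ℝ) - q) = c ^ m := by
        intro m
        rw [hcdef, ← Real.rpow_natCast (c₁ ^ ((1:ℝ) - q)) m, ← Real.rpow_mul hc₁0.le,
          ← Real.rpow_natCast_mul hc₁0.le, mul_comm]
      have bnd : ∀ k, k₀ ≤ k → ‖x k - xb‖ ≤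
          ((β/α) * (M * (f (x k₀) - f xb) ^ ((1:ℝ)-q)) / c ^ k₀) * c ^ k := by
        intro k hk
        obtain ⟨m, rfl⟩ := Nat.exists_eq_add_of_le hk
        have hr : 0 < f (x (k₀ + m)) - f xb := hpos _ (hk₀N₀.trans hk)
        have h1 : (f (x (k₀+m)) - f xb) ^ ((1:ℝ)-q) ≤
            ((f (x k₀) - f xb) * c₁ ^ m) ^ ((1:ℝ)-q) :=
          Real.rpow_le_rpow hr.le (geo m) h1q.le
        have hr₀ : 0 < f (x k₀) - f xb := hpos _ hk₀N₀
        have h2 : ((f (x k₀) - f xb) * c₁ ^ m) ^ ((1:ℝ)-q) =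
            (f (x k₀) - f xb) ^ ((1:ℝ)-q) * c ^ m := by
          rw [Real.mul_rpow hr₀.le (by positivity), hcm]
        have h3 := key (k₀ + m) hk
        simp only [hDdef] at h3
        have hck₀ : (0:ℝ) < c ^ k₀ := by positivity
        have e4 : ((β/α) * (M * (f (x k₀) - f xb) ^ ((1:ℝ)-q)) / c ^ k₀) * c ^ (k₀ + m) =
            (β/α) * (M * ((f (x k₀) - f xb) ^ ((1:ℝ)-q) * c ^ m)) := by
          rw [pow_add]
          field_simp
        rw [e4]
        calc ‖x (k₀+m) - xb‖ ≤ (β/α) * (M * (f (x (k₀+m)) - f xb) ^ (1-q)) := h3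
        _ ≤ (β/α) * (M * ((f (x k₀) - f xb) ^ ((1:ℝ)-q) * c ^ m)) := by
          apply mul_le_mul_of_nonneg_left _ (by positivity)
          apply mul_le_mul_of_nonneg_left _ hM.le
          calc (f (x (k₀+m)) - f xb) ^ ((1:ℝ)-q)
              ≤ ((f (x k₀) - f xb) * c₁ ^ m) ^ ((1:ℝ)-q) := h1
          _ = (f (x k₀) - f xb) ^ ((1:ℝ)-q) * c ^ m := h2
      set C₀ : ℝ := (β/α) * (M * (f (x k₀) - f xb) ^ ((1:ℝ)-q)) / c ^ k₀ with hC₀def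
      have hC₀nn : 0 ≤ C₀ := by
        have hr₀ : 0 < f (x k₀) - f xb := hpos _ hk₀N₀
        have := Real.rpow_pos_of_pos hr₀ ((1:ℝ)-q)
        rw [hC₀def]
        positivity
      set C : ℝ := C₀ + 1 + ∑ j ∈ Finset.range k₀, ‖x j - xb‖ / c ^ j with hCdef
      have hSnn : 0 ≤ ∑ j ∈ Finset.range k₀, ‖x j - xb‖ / c ^ j :=
        Finset.sum_nonneg (fun i _ => by positivity)
      have hC : 0 < C := by rw [hCdef]; linarith
      refine ⟨C, hC, c, ⟨hc0, hc1⟩, fun k => ?_⟩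
      rcases le_or_gt k₀ k with h | h
      · have h1 := bnd k h
        have h2 : C₀ * c ^ k ≤ C * c ^ k := by
          apply mul_le_mul_of_nonneg_right _ (by positivity)
          rw [hCdef]; linarith
        exact le_trans h1 h2
      · have hle : ‖x k - xb‖ / c ^ k ≤ ∑ j ∈ Finset.range k₀, ‖x j - xb‖ / c ^ j :=
          Finset.single_le_sum (f := fun j => ‖x j - xb‖ / c ^ j)
            (fun i _ => by positivity) (Finset.mem_range.mpr h)
        have h2 : ‖x k - xb‖ / c ^ k ≤ C := by rw [hCdef]; linarith
        have hck : (0:ℝ) < c ^ k := by positivity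
        calc ‖x k - xb‖ = (‖x k - xb‖ / c ^ k) * c ^ k := by field_simp
        _ ≤ C * c ^ k := mul_le_mul_of_nonneg_right h2 hck.le
    · -- 1/2 < q : sublinear rate
      intro hq2
      set t : ℝ := 2*q - 1 with htdef
      have ht : 0 < t := by rw [htdef]; linarith
      have ht1 : t < 1 := by rw [htdef]; linarith
      set μ : ℝ := t / A with hμdef
      have hμ : 0 < μ := by positivity
      have convstep : ∀ k, k₀ ≤ k →
          μ ≤ (f (x (k+1)) - f xb) ^ (-t) - (f (x k) - f xb) ^ (-t) := by
        intro k hk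
        have hkN₀ : N₀ ≤ k := hk₀N₀.trans hk
        have ha : 0 < f (x k) - f xb := hpos k hkN₀
        have hb : 0 < f (x (k+1)) - f xb := hpos (k+1) (hkN₀.trans (Nat.le_succ k))
        have hba : f (x (k+1)) - f xb ≤ f (x k) - f xb := by
          have := mono1 k hkN₀; linarith
        set av : ℝ := f (x k) - f xb
        set bv : ℝ := f (x (k+1)) - f xb
        set P : ℝ := av ^ t with hPdef
        set Q : ℝ := bv ^ t with hQdef
        have hP : 0 < P := Real.rpow_pos_of_pos ha t
        have hQ : 0 < Q := Real.rpow_pos_of_pos hb t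
        have hQP : Q ≤ P := Real.rpow_le_rpow hb.le hba ht.le
        -- Bernoulli at exponent t
        have hbern : t * av ^ (t - 1) * (av - bv) ≤ P - Q :=
          bern_aux ha hb.le ht.le ht1.le
        have e5 : av ^ (t - 1) = P / av := by
          rw [hPdef, Real.rpow_sub ha, Real.rpow_one]
        have e6 : av ^ (2*q) = P * av := by
          rw [hPdef, show (2*q : ℝ) = t + 1 by rw [htdef]; ring, Real.rpow_add ha,
            Real.rpow_one]
        have hd := decr k hk
        rw [e6] at hd
        -- av - bv ≥ P * av / A
        have hd2 : P * av ≤ A * (av - bv) := hd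
        have h7 : P * av / A ≤ av - bv := by
          rw [div_le_iff₀ hA]
          linarith [hd2]
        have h8 : (t/A) * P^2 ≤ P - Q := by
          have h9 : t * (P / av) * (P * av / A) ≤ t * (P / av) * (av - bv) := by
            apply mul_le_mul_of_nonneg_left h7 (by positivity)
          have e7 : t * (P / av) * (P * av / A) = (t/A) * P^2 := by
            field_simp
          rw [e7] at h9
          rw [e5] at hbern
          linarith
        have h10 : μ * (P * Q) ≤ P - Q := by
          have : μ * (P * Q) ≤ (t/A) * P^2 := by
            rw [hμdef]
            have : P * Q ≤ P * P := mul_le_mul_of_nonneg_left hQP hP.le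
            nlinarith
          linarith
        have e8 : bv ^ (-t) - av ^ (-t) = (P - Q) / (P * Q) := by
          rw [Real.rpow_neg ha.le, Real.rpow_neg hb.le, ← hPdef, ← hQdef,
            inv_sub_inv hQ.ne' hP.ne', mul_comm Q P]
        rw [e8, le_div_iff₀ (by positivity)]
        linarith
      have sgrow : ∀ k, k₀ ≤ k → μ * ((k:ℝ) - (k₀:ℝ)) ≤ (f (x k) - f xb) ^ (-t) := by
        intro k hk
        induction k, hk using Nat.le_induction with
        | base =>
          simp only [sub_self, mul_zero]
          exact (Real.rpow_pos_of_pos (hpos k₀ hk₀N₀) (-t)).le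
        | succ k hk ih =>
          have h := convstep k hk
          have : μ * ((k:ℝ) + 1 - (k₀:ℝ)) = μ * ((k:ℝ) - (k₀:ℝ)) + μ := by ring
          push_cast
          rw [this]
          linarith
      refine ⟨(β/α) * M * (μ/2) ^ (-(1 - q) / (2*q - 1)) + 1, by positivity, 2*k₀ + 2,
        fun k hk => ?_⟩
      have hkk₀ : k₀ ≤ k := by omega
      have hkpos : (0:ℝ) < (k:ℝ) := by
        have : (1:ℕ) ≤ k := by omega
        exact_mod_cast Nat.lt_of_lt_of_le Nat.zero_lt_one this
      have hk2 : (k:ℝ)/2 ≤ (k:ℝ) - (k₀:ℝ) := by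
        have hcast : (2*k₀ + 2 : ℝ) ≤ (k:ℝ) := by exact_mod_cast hk
        linarith
      have hm : μ/2 * (k:ℝ) ≤ (f (x k) - f xb) ^ (-t) := by
        have h1 := sgrow k hkk₀
        have h2 : μ/2 * (k:ℝ) ≤ μ * ((k:ℝ) - (k₀:ℝ)) := by
          have := mul_le_mul_of_nonneg_left hk2 hμ.le
          calc μ/2 * (k:ℝ) = μ * ((k:ℝ)/2) := by ring
          _ ≤ μ * ((k:ℝ) - (k₀:ℝ)) := this
        linarith
      have hr : 0 < f (x k) - f xb := hpos k (hk₀N₀.trans hkk₀)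
      have hmpos : 0 < μ/2 * (k:ℝ) := by positivity
      have hrk : f (x k) - f xb ≤ (μ/2 * (k:ℝ)) ^ (-t⁻¹) := by
        have h := Real.rpow_le_rpow_of_nonpos hmpos hm (by
          simp only [Left.neg_nonpos_iff]
          positivity : -t⁻¹ ≤ 0)
        rwa [← Real.rpow_mul hr.le, show (-t) * (-t⁻¹) = t * t⁻¹ by ring,
          mul_inv_cancel₀ ht.ne', Real.rpow_one] at h
      have hbnd := key k hkk₀
      simp only [hDdef] at hbnd
      have h1 : (f (x k) - f xb) ^ ((1:ℝ) - q) ≤ ((μ/2 * (k:ℝ)) ^ (-t⁻¹)) ^ ((1:ℝ)-q) :=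
        Real.rpow_le_rpow hr.le hrk h1q.le
      have e9 : ((μ/2 * (k:ℝ)) ^ (-t⁻¹)) ^ ((1:ℝ)-q) =
          (μ/2) ^ (-(1 - q) / (2*q - 1)) * (k:ℝ) ^ (-(1 - q) / (2*q - 1)) := by
        rw [← Real.rpow_mul hmpos.le,
          show (-t⁻¹) * ((1:ℝ)-q) = -(1 - q) / (2*q - 1) by rw [htdef]; ring,
          Real.mul_rpow (by positivity) hkpos.le]
      calc ‖x k - xb‖ ≤ (β/α) * (M * (f (x k) - f xb) ^ (1-q)) := hbnd
      _ ≤ (β/α) * (M * ((μ/2) ^ (-(1 - q) / (2*q - 1)) * (k:ℝ) ^ (-(1 - q) / (2*q - 1)))) := by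
        apply mul_le_mul_of_nonneg_left _ (by positivity)
        apply mul_le_mul_of_nonneg_left _ hM.le
        rw [← e9]
        exact h1
      _ = ((β/α) * M * (μ/2) ^ (-(1 - q) / (2*q - 1))) * (k:ℝ) ^ (-(1 - q) / (2*q - 1)) := by
        ring
      _ ≤ ((β/α) * M * (μ/2) ^ (-(1 - q) / (2*q - 1)) + 1) * (k:ℝ) ^ (-(1 - q) / (2*q - 1)) := by
        apply mul_le_mul_of_nonneg_right _ (Real.rpow_pos_of_pos hkpos _).le
        linarith
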